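/- For all reals a, b ≥ 0 and every real k ≥ 2: (a+b)^k − a^k ≤ 3k·a^{k−1}b + 3k^k·b^k. -/

import Mathlib

open Real

private lemma bern_tangent (x b k : ℝ) (hx : 0 ≤ x) (hb : 0 ≤ b) (hk : 1 ≤ k) :
    (x + b) ^ k - x ^ k ≤ k * (x + b) ^ (k - 1) * b := by
  rcases eq_or_lt_of_le (by positivity : (0:ℝ) ≤ x + b) with h | h
  · have hx0 : x = 0 := by linarith
    have hb0 : b = 0 := by linarith
    simp [← h, hx0, hb0]
  · have hs : (-1:ℝ) ≤ -b / (x + b) := by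
      rw [neg_div, neg_le_neg_iff, div_le_one h]; linarith
    have hB := one_add_mul_self_le_rpow_one_add hs hk
    have h1 : (1:ℝ) + -b / (x + b) = x / (x + b) := by field_simp; ring
    rw [h1, Real.div_rpow hx h.le] at hB
    have hxbk : (0:ℝ) < (x + b) ^ k := Real.rpow_pos_of_pos h k
    have key := mul_le_mul_of_nonneg_right hB hxbk.le
    rw [div_mul_cancel₀ _ hxbk.ne'] at key
    have hE : (x + b) ^ (k - 1) = (x + b) ^ k / (x + b) := by
      rw [Real.rpow_sub h, Real.rpow_one]
    have h2 : (1 + k * (-b / (x + b))) * (x + b) ^ k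
        = (x + b) ^ k - k * ((x + b) ^ k / (x + b)) * b := by
      field_simp; ring
    rw [h2] at key
    rw [hE]; linarith

private lemma one_add_inv_rpow_le (k : ℝ) (hk : 1 ≤ k) : (1 + 1 / k) ^ k ≤ 3 := by
  have hk0 : 0 < k := by linarith
  have h1 : (0:ℝ) ≤ 1 + 1 / k := by positivity
  have h2 : (1 + 1 / k : ℝ) ≤ Real.exp (1 / k) := by
    have := Real.add_one_le_exp (1 / k); linarith
  calc (1 + 1 / k) ^ k ≤ (Real.exp (1 / k)) ^ k :=
        Real.rpow_le_rpow h1 h2 hk0.le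
    _ = Real.exp 1 := by
        rw [← Real.exp_one_rpow (1/k), ← Real.rpow_mul (Real.exp_pos 1).le, one_div,
          inv_mul_cancel₀ hk0.ne', Real.rpow_one]
    _ ≤ 3 := by linarith [Real.exp_one_lt_d9]

theorem stmt9 (a b k : ℝ) (ha : 0 ≤ a) (hb : 0 ≤ b) (hk : 2 ≤ k) :
    (a + b) ^ k - a ^ k ≤ 3 * k * a ^ (k - 1) * b + 3 * k ^ k * b ^ k := by
  have hk1 : (1:ℝ) ≤ k := by linarith
  have hk0 : (0:ℝ) < k := by linarith
  have hE3 : (1 + 1 / k) ^ k ≤ 3 := one_add_inv_rpow_le k hk1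
  have hbase : (0:ℝ) ≤ 1 + 1 / k := by positivity
  rcases le_total a (k * b) with hc | hc
  · -- a ≤ k b : (a+b)^k ≤ ((k+1)b)^k = k^k (1+1/k)^k b^k ≤ 3 k^k b^k
    have h1 : (a + b) ^ k ≤ ((k + 1) * b) ^ k := by
      apply Real.rpow_le_rpow (by positivity) (by nlinarith) hk0.le
    have h2 : ((k + 1) * b) ^ k = k ^ k * (1 + 1 / k) ^ k * b ^ k := by
      rw [← Real.mul_rpow hk0.le hbase, ← Real.mul_rpow (by positivity) hb]
      congr 1; field_simp
    have h3 : k ^ k * (1 + 1 / k) ^ k * b ^ k ≤ 3 * k ^ k * b ^ k := by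
      have hkk : (0:ℝ) ≤ k ^ k := (Real.rpow_pos_of_pos hk0 k).le
      have hbk : (0:ℝ) ≤ b ^ k := Real.rpow_nonneg hb k
      nlinarith [mul_nonneg hkk hbk, Real.rpow_nonneg hbase k]
    have h4 : (0:ℝ) ≤ 3 * k * a ^ (k - 1) * b := by
      have := Real.rpow_nonneg ha (k - 1); positivity
    have h5 : (0:ℝ) ≤ a ^ k := Real.rpow_nonneg ha k
    linarith
  · -- k b ≤ a : use tangent bound
    have h1 := bern_tangent a b k ha hb hk1
    have h2 : (a + b) ^ (k - 1) ≤ 3 * a ^ (k - 1) := by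
      have ha0 : 0 ≤ a + b := by positivity
      have hstep : (a + b) ^ (k - 1) ≤ (a * (1 + 1 / k)) ^ (k - 1) := by
        apply Real.rpow_le_rpow ha0 _ (by linarith)
        have : b ≤ a / k := by rw [le_div_iff₀ hk0]; linarith
        have : a + b ≤ a + a / k := by linarith
        calc a + b ≤ a + a / k := this
          _ = a * (1 + 1 / k) := by field_simp
      have hsplit : (a * (1 + 1 / k)) ^ (k - 1) = a ^ (k - 1) * (1 + 1 / k) ^ (k - 1) :=
        Real.mul_rpow ha hbase
      have hmono : (1 + 1 / k) ^ (k - 1) ≤ (1 + 1 / k) ^ k := by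
        apply Real.rpow_le_rpow_of_exponent_le _ (by linarith)
        have : (0:ℝ) < 1 / k := by positivity
        linarith
      have hak : (0:ℝ) ≤ a ^ (k - 1) := Real.rpow_nonneg ha _
      calc (a + b) ^ (k - 1) ≤ a ^ (k - 1) * (1 + 1 / k) ^ (k - 1) := by
            rw [← hsplit]; exact hstep
        _ ≤ a ^ (k - 1) * 3 := by nlinarith
        _ = 3 * a ^ (k - 1) := by ring
    have h3 : k * (a + b) ^ (k - 1) * b ≤ 3 * k * a ^ (k - 1) * b := by
      nlinarith [mul_le_mul_of_nonneg_left h2 (mul_nonneg hk0.le hb)]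
    have h4 : (0:ℝ) ≤ 3 * k ^ k * b ^ k := by
      have := Real.rpow_nonneg hb k
      have := (Real.rpow_pos_of_pos hk0 k).le
      positivity
    linarith
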